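/- Let 𝔫 be a finite-dimensional nilpotent Lie algebra with one-dimensional center 𝔷, and let 𝔪 ⊆ 𝔫 be a subalgebra containing 𝔷 such that 𝔫/𝔷 is the direct sum of the two ideals 𝔪/𝔷 and z_𝔫(𝔪)/𝔷, where z_𝔫(𝔪) is the centralizer of 𝔪 in 𝔫, and suppose the center of 𝔫/𝔷 is contained in 𝔪/𝔷. Then z_𝔫(𝔪) = 𝔷, and hence 𝔫 = 𝔪. -/

import Mathlib

/-- Let 𝔫 be a finite-dimensional nilpotent Lie algebra with
one-dimensional centre 𝔷 and 𝔪 ⊆ 𝔫 a subalgebra containing 𝔷 such that 𝔫/𝔷 is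
the direct sum of the ideals 𝔪/𝔷 and z_𝔫(𝔪)/𝔷, and such that the centre of 𝔫/𝔷
is contained in 𝔪/𝔷.  Then z_𝔫(𝔪) = 𝔷 and 𝔫 = 𝔪. -/
theorem centralizer_eq_center_of_direct_sum
    (F : Type*) [Field F] [CharZero F]
    (N : Type*) [LieRing N] [LieAlgebra F N] [Module.Finite F N]
    [LieRing.IsNilpotent N]
    -- the centre 𝔷
    (z : Submodule F N) (hz : ∀ x : N, x ∈ z ↔ ∀ y : N, ⁅x, y⁆ = 0)
    (hz1 : Module.finrank F z = 1)
    -- the subalgebra 𝔪 containing 𝔷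
    (m : LieSubalgebra F N) (hzm : ∀ x ∈ z, x ∈ m)
    -- the centraliser z_𝔫(𝔪)
    (zm : Submodule F N) (hzmdef : ∀ x : N, x ∈ zm ↔ ∀ y ∈ m, ⁅x, y⁆ = (0 : N))
    -- 𝔪/𝔷 and z_𝔫(𝔪)/𝔷 are ideals of 𝔫/𝔷 ...
    (hmIdeal : ∀ x : N, ∀ y ∈ m, ⁅x, y⁆ ∈ m)
    (hzmIdeal : ∀ x : N, ∀ y ∈ zm, ⁅x, y⁆ ∈ zm)
    -- ... whose (direct) sum is 𝔫/𝔷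
    (hsum : ∀ x : N, ∃ a ∈ m, ∃ c ∈ zm, x = a + c)
    (hint : ∀ x : N, (x ∈ m ∧ x ∈ zm) ↔ x ∈ z)
    -- the centre of 𝔫/𝔷 is contained in 𝔪/𝔷
    (hcent : ∀ x : N, (∀ y : N, ⁅x, y⁆ ∈ z) → x ∈ m) :
    (∀ x : N, x ∈ zm ↔ x ∈ z) ∧ (∀ x : N, x ∈ m) := by
  have hzsub : ∀ x ∈ z, x ∈ zm := fun x hx => (hzmdef x).mpr fun y _ => (hz x).mp hx y
  obtain ⟨k, hk⟩ := LieModule.IsNilpotent.nilpotent F N N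
  have key : ∀ j : ℕ, ∀ u w : N, u ∈ LieModule.lowerCentralSeries F N N (k - j) → w ∈ z →
      u + w ∈ zm → u + w ∈ z := by
    intro j
    induction j with
    | zero =>
      intro u w hu hw _
      rw [Nat.sub_zero, hk, LieSubmodule.mem_bot] at hu
      subst hu
      simpa using hw
    | succ j ih =>
      intro u w hu hw hx
      have hxm : u + w ∈ m := by
        apply hcent
        intro y
        obtain ⟨a, ha, c, hc, rfl⟩ := hsum y
        have h1 : ⁅u + w, a⁆ = 0 := (hzmdef _).mp hx a ha
        have huc : ⁅u, c⁆ ∈ LieModule.lowerCentralSeries F N N (k - j) := by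
          have h2 : ⁅c, u⁆ ∈ LieModule.lowerCentralSeries F N N (k - (j + 1) + 1) := by
            rw [LieModule.lowerCentralSeries_succ]
            exact LieSubmodule.lie_mem_lie (LieSubmodule.mem_top c) hu
          have hle : LieModule.lowerCentralSeries F N N (k - (j + 1) + 1) ≤
              LieModule.lowerCentralSeries F N N (k - j) :=
            LieModule.antitone_lowerCentralSeries F N N (by omega)
          have h3 := neg_mem (hle h2)
          rw [← lie_skew, neg_neg] at h3
          exact h3
        have hwc : ⁅w, c⁆ = 0 := (hz w).mp hw c
        have hxc : ⁅u + w, c⁆ = ⁅u, c⁆ := by rw [add_lie, hwc, add_zero]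
        have hxczm : ⁅u, c⁆ ∈ zm := hxc ▸ hzmIdeal _ c hc
        have hz' : ⁅u + w, c⁆ ∈ z := by
          rw [hxc]
          have := ih ⁅u, c⁆ 0 huc z.zero_mem (by simpa using hxczm)
          simpa using this
        have : ⁅u + w, a + c⁆ = ⁅u + w, c⁆ := by rw [lie_add, h1, zero_add]
        rw [this]; exact hz'
      exact (hint _).mp ⟨hxm, hx⟩
  have hzmz : ∀ x : N, x ∈ zm → x ∈ z := by
    intro x hx
    have h0 : x + 0 ∈ z := by
      refine key k x 0 ?_ z.zero_mem (by simpa using hx)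
      rw [Nat.sub_self, LieModule.lowerCentralSeries_zero]
      exact LieSubmodule.mem_top x
    simpa using h0
  refine ⟨fun x => ⟨hzmz x, hzsub x⟩, fun x => ?_⟩
  obtain ⟨a, ha, c, hc, rfl⟩ := hsum x
  exact m.add_mem ha (hzm c (hzmz c hc))
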